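/- Let K > 0 and define Φ(ρ, r, φ) := ( (K²·sinh²ρ − r²)/4 , (K/2)·r·sinh ρ·cos φ , (K/2)·r·cosh ρ·sin φ ) ∈ ℝ³. Then the set { Φ(ρ, r, φ) : ρ, φ ∈ ℝ, r ≥ 0, K²(cosh(4ρ) − 1) + 4r²(cosh(2ρ) + cos(2φ)) = 0 } equals the parabola { (−t²/4, 0, K·t/2) : t ∈ ℝ }. (Hence the singular set of the harmonic function of the E(2)-symmetric hyper-Kähler metric is a parabola in ℝ³, so its singularities are not isolated and the metric is not of multi-centred Gibbons–Hawking type.) -/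
import Mathlib


open Real

/-- **The singular set of the `E(2)`-symmetric harmonic function is a parabola.**
For `K > 0` and `Φ(ρ, r, φ) = ((K² sinh²ρ − r²)/4, (K/2) r sinh ρ cos φ, (K/2) r cosh ρ sin φ)`,
the image under `Φ` of the set where `K²(cosh 4ρ − 1) + 4r²(cosh 2ρ + cos 2φ) = 0` (with `r ≥ 0`)
is exactly the parabola `{(−t²/4, 0, Kt/2) : t ∈ ℝ}` in `ℝ³`. -/
theorem E2_singular_set_is_parabola (K : ℝ) (hK : 0 < K) :
    { p : ℝ × ℝ × ℝ | ∃ ρ φ r : ℝ, 0 ≤ r ∧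
        K ^ 2 * (Real.cosh (4 * ρ) - 1)
          + 4 * r ^ 2 * (Real.cosh (2 * ρ) + Real.cos (2 * φ)) = 0 ∧
        p = ((K ^ 2 * Real.sinh ρ ^ 2 - r ^ 2) / 4,
              K / 2 * r * Real.sinh ρ * Real.cos φ,
              K / 2 * r * Real.cosh ρ * Real.sin φ) }
      = { p : ℝ × ℝ × ℝ | ∃ t : ℝ, p = (-t ^ 2 / 4, 0, K * t / 2) } := by
  ext p
  simp only [Set.mem_setOf_eq]
  constructor
  · rintro ⟨ρ, φ, r, hr, heq, rfl⟩
    have h1 : (1:ℝ) ≤ Real.cosh (4 * ρ) := Real.one_le_cosh _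
    have h2 : (1:ℝ) ≤ Real.cosh (2 * ρ) := Real.one_le_cosh _
    have h3 : (-1:ℝ) ≤ Real.cos (2 * φ) := Real.neg_one_le_cos _
    have hcosh : Real.cosh (4 * ρ) = 1 := by nlinarith [mul_nonneg (sq_nonneg r) (by linarith : (0:ℝ) ≤ Real.cosh (2*ρ) + Real.cos (2*φ)), pow_pos hK 2]
    have hρ : ρ = 0 := by
      have hs : Real.sinh (4 * ρ) = 0 := by
        have := Real.cosh_sq (4 * ρ)
        nlinarith [Real.sinh_sq (4 * ρ)]
      have := Real.sinh_eq_zero.mp hs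
      linarith
    subst hρ
    have hc2 : Real.cos (2 * φ) = 2 * Real.cos φ ^ 2 - 1 := Real.cos_two_mul φ
    have hrc : r * Real.cos φ = 0 := by
      have : (r * Real.cos φ) ^ 2 = 0 := by
        simp only [mul_zero, Real.cosh_zero, hc2] at heq
        nlinarith
      exact pow_eq_zero_iff (n := 2) (by norm_num) |>.mp this
    refine ⟨r * Real.sin φ, ?_⟩
    have ht : (r * Real.sin φ) ^ 2 = r ^ 2 := by
      have := Real.sin_sq_add_cos_sq φ
      nlinarith
    simp only [Real.sinh_zero, Real.cosh_zero]
    refine Prod.ext ?_ (Prod.ext ?_ ?_) <;> simp <;> nlinarith [hrc, ht]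
  · rintro ⟨t, rfl⟩
    rcases le_or_gt 0 t with ht | ht
    · refine ⟨0, π / 2, t, ht, ?_, ?_⟩
      · rw [show (2:ℝ) * (π / 2) = π by ring, Real.cos_pi]; simp
      · norm_num [Real.sin_pi_div_two]; ring
    · refine ⟨0, -(π / 2), -t, by linarith, ?_, ?_⟩
      · rw [show (2:ℝ) * -(π / 2) = -π by ring, Real.cos_neg, Real.cos_pi]; simp
      · norm_num [Real.sin_pi_div_two]; ring
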